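/- In the bursty-traffic IRSA model with λ, σ ∈ (0,1) and P_l ∈ [0,1), the stationary probabilities satisfy Σ_{ℓ=0}^∞ π_ℓ^A = λ/(λ+σ) = p_A and Σ_{ℓ=0}^∞ (π_ℓ^S + π_ℓ^A) = 1, where (π_ℓ^S, π_ℓ^A)ᵀ = M^ℓ (σ(1-P_l)p_A, (1-σ)(1-P_l)p_A)ᵀ and M is the matrix with rows (1-λ, P_l σ), (λ, P_l(1-σ)). -/
import Mathlib


/-- In the bursty-traffic IRSA model, Σ_ℓ π_ℓ^A = p_A and Σ_ℓ (π_ℓ^S + π_ℓ^A) = 1. -/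
theorem bursty_stationary_sums (lam σ Pl : ℝ) (hlam0 : 0 < lam) (hlam1 : lam < 1)
    (hσ0 : 0 < σ) (hσ1 : σ < 1) (hPl0 : 0 ≤ Pl) (hPl1 : Pl < 1)
    (pA : ℝ) (hpA : pA = lam / (lam + σ))
    (M : Matrix (Fin 2) (Fin 2) ℝ)
    (hM : M = !![1 - lam, Pl * σ; lam, Pl * (1 - σ)])
    (πS πA : ℕ → ℝ)
    (hπS : ∀ ℓ, πS ℓ = (M ^ ℓ).mulVec ![σ * (1 - Pl) * pA, (1 - σ) * (1 - Pl) * pA] 0)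
    (hπA : ∀ ℓ, πA ℓ = (M ^ ℓ).mulVec ![σ * (1 - Pl) * pA, (1 - σ) * (1 - Pl) * pA] 1) :
    (∑' ℓ : ℕ, πA ℓ) = pA ∧ (∑' ℓ : ℕ, (πS ℓ + πA ℓ)) = 1 := by
  have hpA0 : 0 < pA := by
    rw [hpA]; positivity
  -- initial values
  have hs0 : πS 0 = σ * (1 - Pl) * pA := by
    simp [hπS]
  have ha0 : πA 0 = (1 - σ) * (1 - Pl) * pA := by
    simp [hπA]
  -- recurrences
  have hrecS : ∀ n, πS (n + 1) = (1 - lam) * πS n + Pl * σ * πA n := by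
    intro n
    rw [hπS, hπS n, hπA n, pow_succ', ← Matrix.mulVec_mulVec, hM]
    simp [Matrix.mulVec, dotProduct, Fin.sum_univ_two]
  have hrecA : ∀ n, πA (n + 1) = lam * πS n + Pl * (1 - σ) * πA n := by
    intro n
    rw [hπA, hπS n, hπA n, pow_succ', ← Matrix.mulVec_mulVec, hM]
    simp [Matrix.mulVec, dotProduct, Fin.sum_univ_two]
  -- nonnegativity
  have hnonneg : ∀ n, 0 ≤ πS n ∧ 0 ≤ πA n := by
    intro n
    induction n with
    | zero =>
      refine ⟨?_, ?_⟩
      · rw [hs0]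
        exact mul_nonneg (mul_nonneg hσ0.le (by linarith)) hpA0.le
      · rw [ha0]
        exact mul_nonneg (mul_nonneg (by linarith) (by linarith)) hpA0.le
    | succ k ih =>
      obtain ⟨h1, h2⟩ := ih
      refine ⟨?_, ?_⟩
      · rw [hrecS]
        exact add_nonneg (mul_nonneg (by linarith) h1)
          (mul_nonneg (mul_nonneg hPl0 hσ0.le) h2)
      · rw [hrecA]
        exact add_nonneg (mul_nonneg hlam0.le h1)
          (mul_nonneg (mul_nonneg hPl0 (by linarith)) h2)
  -- two-step contraction on u n = πS n + πA n
  set r : ℝ := max (1 - lam * (1 - Pl)) (Pl * (σ + Pl * (1 - σ))) with hr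
  have hr0 : 0 < r := lt_max_of_lt_left (by nlinarith)
  have hr1 : r < 1 := by
    apply max_lt
    · nlinarith
    · calc Pl * (σ + Pl * (1 - σ)) ≤ Pl * 1 := by
            apply mul_le_mul_of_nonneg_left _ hPl0
            nlinarith
      _ < 1 := by linarith
  have hstep : ∀ n, πS (n + 2) + πA (n + 2) ≤ r * (πS n + πA n) := by
    intro n
    have h1 := (hnonneg n).1
    have h2 := (hnonneg n).2
    have e1 : πS (n + 2) + πA (n + 2)
        = (1 - lam * (1 - Pl)) * πS n + (Pl * (σ + Pl * (1 - σ))) * πA n := by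
      rw [hrecS (n+1), hrecA (n+1), hrecS n, hrecA n]; ring
    have hb1 : (1 - lam * (1 - Pl)) ≤ r := le_max_left _ _
    have hb2 : (Pl * (σ + Pl * (1 - σ))) ≤ r := le_max_right _ _
    rw [e1]
    nlinarith [mul_le_mul_of_nonneg_right hb1 h1, mul_le_mul_of_nonneg_right hb2 h2]
  set q : ℝ := Real.sqrt r with hq
  have hq0 : 0 < q := Real.sqrt_pos.mpr hr0
  have hq1 : q < 1 := by
    rw [hq, show (1:ℝ) = Real.sqrt 1 by simp]
    exact Real.sqrt_lt_sqrt (le_of_lt hr0) hr1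
  have hqq : q * q = r := Real.mul_self_sqrt (le_of_lt hr0)
  set C : ℝ := max (πS 0 + πA 0) ((πS 1 + πA 1) / q) with hC
  have hC0 : 0 ≤ C := le_trans (by linarith [(hnonneg 0).1, (hnonneg 0).2]) (le_max_left _ _)
  have hbound : ∀ n, πS n + πA n ≤ C * q ^ n := by
    intro n
    induction n using Nat.strong_induction_on with
    | _ n ih =>
      match n with
      | 0 =>
        rw [pow_zero, mul_one, hC]
        exact le_max_left _ _
      | 1 =>
        have := le_max_right (πS 0 + πA 0) ((πS 1 + πA 1) / q)
        calc πS 1 + πA 1 = ((πS 1 + πA 1) / q) * q := by field_simp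
        _ ≤ C * q := by nlinarith
        _ = C * q ^ 1 := by ring
      | (k + 2) =>
        have hk := ih k (by omega)
        calc πS (k + 2) + πA (k + 2) ≤ r * (πS k + πA k) := hstep k
        _ ≤ r * (C * q ^ k) := by nlinarith
        _ = C * q ^ (k + 2) := by rw [← hqq]; ring
  -- summability
  have hgeo : Summable (fun n : ℕ => C * q ^ n) :=
    (summable_geometric_of_lt_one (le_of_lt hq0) hq1).mul_left C
  have hu : Summable (fun n => πS n + πA n) := by
    apply Summable.of_nonneg_of_le (fun n => by linarith [(hnonneg n).1, (hnonneg n).2])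
      (fun n => hbound n) hgeo
  have hsS : Summable πS := by
    apply Summable.of_nonneg_of_le (fun n => (hnonneg n).1)
      (fun n => by linarith [(hnonneg n).2]) hu
  have hsA : Summable πA := by
    apply Summable.of_nonneg_of_le (fun n => (hnonneg n).2)
      (fun n => by linarith [(hnonneg n).1]) hu
  set S : ℝ := ∑' n, πS n with hS
  set A : ℝ := ∑' n, πA n with hA
  -- shifted sums
  have eq1 : S = πS 0 + ((1 - lam) * S + Pl * σ * A) := by
    have h := Summable.tsum_eq_zero_add hsS
    rw [← hS] at h
    have hshift : (∑' n, πS (n + 1)) = (1 - lam) * S + Pl * σ * A := by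
      calc (∑' n, πS (n + 1)) = ∑' n, ((1 - lam) * πS n + Pl * σ * πA n) :=
            tsum_congr (fun n => hrecS n)
      _ = (1 - lam) * S + Pl * σ * A := by
          rw [Summable.tsum_add (hsS.mul_left _) (hsA.mul_left _), tsum_mul_left, tsum_mul_left]
    rw [hshift] at h
    exact h
  have eq2 : A = πA 0 + (lam * S + Pl * (1 - σ) * A) := by
    have h := Summable.tsum_eq_zero_add hsA
    rw [← hA] at h
    have hshift : (∑' n, πA (n + 1)) = lam * S + Pl * (1 - σ) * A := by
      calc (∑' n, πA (n + 1)) = ∑' n, (lam * πS n + Pl * (1 - σ) * πA n) :=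
            tsum_congr (fun n => hrecA n)
      _ = lam * S + Pl * (1 - σ) * A := by
          rw [Summable.tsum_add (hsS.mul_left _) (hsA.mul_left _), tsum_mul_left, tsum_mul_left]
    rw [hshift] at h
    exact h
  rw [hs0] at eq1
  rw [ha0] at eq2
  -- solve the linear system
  have hApA : A = pA := by
    have h : (1 - Pl) * (A - pA) = 0 := by linear_combination eq1 + eq2
    rcases mul_eq_zero.mp h with h1 | h1
    · linarith
    · linarith
  have hSval : lam * S = σ * pA := by linear_combination eq1 + Pl * σ * hApA
  have hS' : S = σ * pA / lam := by
    rw [eq_div_iff hlam0.ne']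
    linear_combination hSval
  refine ⟨hApA, ?_⟩
  rw [Summable.tsum_add hsS hsA, ← hS, ← hA, hApA, hS', hpA]
  have hlamσ : (0:ℝ) < lam + σ := by linarith
  field_simp
  ring
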